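/- Let I ⊆ ℚ[X] = ℚ[x₁,…,x_n] be an ideal, let F ∈ ℚ[T] be squarefree, and let r = x_n + Σ_{i=1}^{n-1} aᵢxᵢ with a₁,…,a_{n-1} ∈ ℤ. Assume deg(F) = dim_ℚ(ℚ[X]/I) (finite), F(r) ∈ I, and no proper factor of F(r) is in I. Let F = F₁⋯F_s be the factorization of F into irreducible factors over ℚ. Then I = ⋂_{i=1}^{s} ⟨I, Fᵢ(r)⟩, and the ideal ⟨I, Fᵢ(r)⟩ is prime for each i = 1,…,s. -/

import Mathlib

set_option maxHeartbeats 1000000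
set_option synthInstance.maxHeartbeats 400000


open MvPolynomial

/-- **Corollary (second part).** Let `I ⊆ ℚ[x₁,…,xₙ]` be an ideal, `F ∈ ℚ[T]` squarefree,
`r = xₙ + Σ aᵢxᵢ` with integer `aᵢ`, `deg F = dim_ℚ ℚ[X]/I` (finite), `F(r) ∈ I` and no
proper factor of `F(r)` in `I`. If `F = F₁ ⋯ F_s` with each `Fᵢ` irreducible, then
`I = ⋂ᵢ ⟨I, Fᵢ(r)⟩` and each `⟨I, Fᵢ(r)⟩` is prime. -/
theorem statement4 (n s : ℕ) (I : Ideal (MvPolynomial (Fin (n + 1)) ℚ))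
    (F : Polynomial ℚ) (hsf : Squarefree F) (a : Fin n → ℤ)
    (r : MvPolynomial (Fin (n + 1)) ℚ)
    (hr : r = X (Fin.last n) + ∑ i : Fin n, C ((a i : ℚ)) * X i.castSucc)
    (hfin : Module.Finite ℚ (MvPolynomial (Fin (n + 1)) ℚ ⧸ I))
    (hdeg : F.natDegree = Module.finrank ℚ (MvPolynomial (Fin (n + 1)) ℚ ⧸ I))
    (hFr : Polynomial.aeval r F ∈ I)
    (hproper : ∀ H : Polynomial ℚ, H ∣ F → 0 < H.natDegree → H.natDegree < F.natDegree →
      Polynomial.aeval r H ∉ I)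
    (Fi : Fin s → Polynomial ℚ) (hirr : ∀ i, Irreducible (Fi i))
    (hfac : F = ∏ i, Fi i) :
    I = (⨅ i : Fin s, (I ⊔ Ideal.span {Polynomial.aeval r (Fi i)})) ∧
      ∀ i : Fin s, (I ⊔ Ideal.span {Polynomial.aeval r (Fi i)}).IsPrime := by
  classical
  have hF0 : F ≠ 0 := hsf.ne_zero
  have hFi0 : ∀ i, Fi i ≠ 0 := fun i => (hirr i).ne_zero
  have hFidvd : ∀ i, Fi i ∣ F := fun i => hfac ▸ Finset.dvd_prod_of_mem _ (Finset.mem_univ i)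
  by_cases hd0 : F.natDegree = 0
  · -- degenerate case: `F` is a nonzero constant, `s = 0`, `I = ⊤`
    have hs : s = 0 := by
      by_contra hs
      have i0 : Fin s := ⟨0, Nat.pos_of_ne_zero hs⟩
      have h1 : 0 < (Fi i0).natDegree := (hirr i0).natDegree_pos
      have h2 : (Fi i0).natDegree ≤ F.natDegree :=
        Polynomial.natDegree_le_of_dvd (hFidvd i0) hF0
      omega
    subst hs
    have hsub : Subsingleton (MvPolynomial (Fin (n + 1)) ℚ ⧸ I) := by
      have h := hdeg; rw [hd0] at h
      exact Module.finrank_zero_iff.mp h.symm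
    have hI : I = ⊤ := Ideal.Quotient.subsingleton_iff.mp hsub
    refine ⟨?_, fun i => i.elim0⟩
    rw [hI, iInf_of_empty]
  -- main case
  have hdpos : 0 < F.natDegree := Nat.pos_of_ne_zero hd0
  haveI := hfin
  haveI hnt : Nontrivial (MvPolynomial (Fin (n + 1)) ℚ ⧸ I) := by
    rw [← Module.finrank_pos_iff (R := ℚ)]
    omega
  set mk := Ideal.Quotient.mkₐ ℚ I with hmk
  set t : MvPolynomial (Fin (n + 1)) ℚ ⧸ I := mk r with ht
  have key : ∀ G : Polynomial ℚ, Polynomial.aeval t G = mk (Polynomial.aeval r G) := fun G =>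
    Polynomial.aeval_algHom_apply mk r G
  have memI : ∀ G : Polynomial ℚ, Polynomial.aeval t G = 0 ↔ Polynomial.aeval r G ∈ I := by
    intro G
    rw [key G, hmk, Ideal.Quotient.mkₐ_eq_mk]
    exact Ideal.Quotient.eq_zero_iff_mem
  have hFt : Polynomial.aeval t F = 0 := (memI F).mpr hFr
  have hint : IsIntegral ℚ t := IsIntegral.of_finite ℚ t
  set m := minpoly ℚ t with hm
  have hmdvd : m ∣ F := minpoly.dvd ℚ t hFt
  have hm0 : m ≠ 0 := minpoly.ne_zero hint
  have hmdeg : m.natDegree = F.natDegree := by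
    have h1 : 0 < m.natDegree := minpoly.natDegree_pos hint
    have h2 : m.natDegree ≤ F.natDegree := Polynomial.natDegree_le_of_dvd hmdvd hF0
    rcases eq_or_lt_of_le h2 with h | h
    · exact h
    · exact absurd ((memI m).mp (minpoly.aeval ℚ t)) (hproper m hmdvd h1 h)
  -- F and m generate the same divisibility
  have hassocFm : Associated m F := by
    obtain ⟨c, hc⟩ := hmdvd
    have hc0 : c ≠ 0 := by
      intro h; rw [h, mul_zero] at hc; exact hF0 hc
    have hcdeg : c.natDegree = 0 := by
      have := Polynomial.natDegree_mul hm0 hc0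
      rw [← hc] at this; omega
    have hcu : IsUnit c := by
      rw [Polynomial.eq_C_of_natDegree_eq_zero hcdeg]
      refine Polynomial.isUnit_C.mpr (isUnit_iff_ne_zero.mpr ?_)
      intro h
      apply hc0
      rw [Polynomial.eq_C_of_natDegree_eq_zero hcdeg, h, map_zero]
    exact ⟨hcu.unit, by rw [IsUnit.unit_spec]; exact hc.symm⟩
  have hker : ∀ G : Polynomial ℚ, Polynomial.aeval t G = 0 ↔ F ∣ G := by
    intro G
    constructor
    · intro h
      exact hassocFm.symm.dvd.trans (minpoly.dvd ℚ t h)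
    · rintro ⟨q, rfl⟩
      rw [map_mul, hFt, zero_mul]
  -- surjectivity of evaluation at t
  have hadj : Algebra.adjoin ℚ ({t} : Set (MvPolynomial (Fin (n + 1)) ℚ ⧸ I)) = ⊤ := by
    have h1 : Module.finrank ℚ (Algebra.adjoin ℚ ({t} : Set (MvPolynomial (Fin (n + 1)) ℚ ⧸ I))) = m.natDegree := by
      rw [(Algebra.adjoin.powerBasis hint).finrank, Algebra.adjoin.powerBasis_dim]
    apply Algebra.toSubmodule_eq_top.mp
    apply Submodule.eq_top_of_finrank_eq
    rw [(Algebra.adjoin ℚ ({t} : Set (MvPolynomial (Fin (n + 1)) ℚ ⧸ I))).finrank_toSubmodule, h1, hmdeg, hdeg]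
  have hsurj : Function.Surjective (Polynomial.aeval t : Polynomial ℚ →ₐ[ℚ] _) := by
    rw [← AlgHom.range_eq_top, ← Algebra.adjoin_singleton_eq_range_aeval]
    exact hadj
  -- pairwise coprimality of the Fi
  have hcop : Pairwise (Function.onFun IsCoprime Fi) := by
    intro i j hij
    refine ((hirr i).coprime_iff_not_dvd).mpr ?_
    intro hdvd'
    have hsq : Fi i * Fi i ∣ F := by
      calc Fi i * Fi i ∣ Fi i * Fi j := mul_dvd_mul_left _ hdvd'
        _ ∣ Fi i * ∏ k ∈ Finset.univ.erase i, Fi k := by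
            exact mul_dvd_mul_left _
              (Finset.dvd_prod_of_mem _ (Finset.mem_erase.mpr ⟨hij.symm, Finset.mem_univ j⟩))
        _ = F := by rw [Finset.mul_prod_erase _ _ (Finset.mem_univ i), hfac]
    exact (hirr i).not_isUnit (hsf _ hsq)
  -- primality of the ideals span {Fi i (t)}
  have hPprime : ∀ i, (Ideal.span {Polynomial.aeval t (Fi i)}).IsPrime := by
    intro i
    haveI h1 : (Ideal.span {Fi i}).IsPrime :=
      (Ideal.span_singleton_prime (hFi0 i)).mpr (hirr i).prime
    have h2 : RingHom.ker (Polynomial.aeval t : Polynomial ℚ →ₐ[ℚ] _) ≤ Ideal.span {Fi i} := by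
      intro G hG
      rw [RingHom.mem_ker] at hG
      exact Ideal.mem_span_singleton.mpr ((hFidvd i).trans ((hker G).mp hG))
    have h3 := Ideal.map_isPrime_of_surjective hsurj h2 (I := Ideal.span {Fi i})
    rwa [Ideal.map_span, Set.image_singleton] at h3
  -- the correspondence between ideals
  have hcomap : ∀ i, Ideal.comap (Ideal.Quotient.mk I)
      (Ideal.span {Polynomial.aeval t (Fi i)}) =
      I ⊔ Ideal.span {Polynomial.aeval r (Fi i)} := by
    intro i
    have hmap : Ideal.map (Ideal.Quotient.mk I)
        (I ⊔ Ideal.span {Polynomial.aeval r (Fi i)}) =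
        Ideal.span {Polynomial.aeval t (Fi i)} := by
      rw [Ideal.map_sup, Ideal.map_quotient_self, Ideal.map_span, Set.image_singleton,
        bot_sup_eq, key (Fi i), hmk, Ideal.Quotient.mkₐ_eq_mk]
    rw [← hmap, Ideal.comap_map_of_surjective _ Ideal.Quotient.mk_surjective,
      ← RingHom.ker_eq_comap_bot, Ideal.mk_ker]
    exact sup_eq_left.mpr le_sup_left
  constructor
  · refine le_antisymm (le_iInf fun i => le_sup_left) ?_
    intro g hg
    rw [Ideal.mem_iInf] at hg
    obtain ⟨G, hG⟩ := hsurj (Ideal.Quotient.mk I g)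
    have hdvd : ∀ i, Fi i ∣ G := by
      intro i
      have h1 : g ∈ Ideal.comap (Ideal.Quotient.mk I)
          (Ideal.span {Polynomial.aeval t (Fi i)}) := by
        rw [hcomap i]; exact hg i
      rw [Ideal.mem_comap, ← hG, Ideal.mem_span_singleton] at h1
      obtain ⟨y, hy⟩ := h1
      obtain ⟨H, rfl⟩ := hsurj y
      have h2 : Polynomial.aeval t (G - Fi i * H) = 0 := by
        rw [map_sub, map_mul, hy, sub_self]
      have h3 : Fi i ∣ G - Fi i * H := (hFidvd i).trans ((hker _).mp h2)
      have := dvd_add h3 (Dvd.intro H rfl)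
      rwa [sub_add_cancel] at this
    have hFG : F ∣ G := hfac ▸ Fintype.prod_dvd_of_coprime hcop hdvd
    have : Polynomial.aeval t G = 0 := (hker G).mpr hFG
    rw [hG] at this
    exact Ideal.Quotient.eq_zero_iff_mem.mp this
  · intro i
    rw [← hcomap i]
    exact Ideal.IsPrime.comap _ (hK := hPprime i)
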